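/- Let a, b₁, …, b_m ∈ ℝⁿ and ε > 0. If a and b_j are ε-close to antipodal for every j = 1, …, m, then a and the average (1/m)∑_{j=1}^m b_j are ε-close to antipodal. The same statement holds with 'podal' in place of 'antipodal' throughout. -/

import Mathlib

open scoped RealInnerProductSpace

open scoped Classical in
/-- The lazy random walk matrix of a graph `G` with degree parameter `d`. -/
noncomputable def lazyWalk {n : ℕ} (G : SimpleGraph (Fin n)) (d : ℕ) :
    Matrix (Fin n) (Fin n) ℝ :=
  Matrix.of fun u v =>
    if u = v then 1 - ((G.neighborSet u).ncard : ℝ) / (2 * d)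
    else if G.Adj u v then 1 / (2 * d) else 0

/-- `G` has maximum degree at most `d`. -/
def MaxDegreeLE {n : ℕ} (G : SimpleGraph (Fin n)) (d : ℕ) : Prop :=
  ∀ v, (G.neighborSet v).ncard ≤ d

/-- `p_u^t`: the endpoint distribution of a length-`t` lazy random walk from `u`. -/
noncomputable def pvec {n : ℕ} (G : SimpleGraph (Fin n)) (d t : ℕ) (u : Fin n) :
    EuclideanSpace ℝ (Fin n) :=
  WithLp.toLp 2 (fun v => ((lazyWalk G d ^ t).mulVec fun w => if w = u then 1 else 0) v)

/-- `q_u^t = p_u^t - (1/n) 𝟙`. -/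
noncomputable def qvec {n : ℕ} (G : SimpleGraph (Fin n)) (d t : ℕ) (u : Fin n) :
    EuclideanSpace ℝ (Fin n) :=
  WithLp.toLp 2 (fun v => pvec G d t u v - 1 / n)

/-- `q_u^0 = 1_u - (1/n) 𝟙`. -/
noncomputable def qzero {n : ℕ} (u : Fin n) : EuclideanSpace ℝ (Fin n) :=
  WithLp.toLp 2 (fun v => (if v = u then 1 else 0) - 1 / n)

/-- average of `q_u^0` over `u ∈ S`. -/
noncomputable def qavg {n : ℕ} (S : Finset (Fin n)) : EuclideanSpace ℝ (Fin n) :=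
  (S.card : ℝ)⁻¹ • ∑ u ∈ S, qzero u

/-- `a` and `b` are `ε`-close to collinear. -/
def CloseCollinear {E : Type*} [NormedAddCommGroup E] [NormedSpace ℝ E]
    (ε : ℝ) (a b : E) : Prop :=
  ∃ (ea eb w : E) (s s' : ℝ),
    ‖ea‖ ≤ ε ∧ ‖eb‖ ≤ ε ∧ a + ea = s • w ∧ b + eb = s' • w

/-- `a` and `b` are `ε`-close to antipodal. -/
def CloseAntipodal {E : Type*} [NormedAddCommGroup E] [NormedSpace ℝ E]
    (ε : ℝ) (a b : E) : Prop :=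
  ∃ (ea eb w : E) (s s' : ℝ), 0 ≤ s ∧ 0 ≤ s' ∧
    ‖ea‖ ≤ ε ∧ ‖eb‖ ≤ ε ∧ a + ea = s • w ∧ b + eb = -(s' • w)

/-- `a` and `b` are `ε`-close to podal. -/
def ClosePodal {E : Type*} [NormedAddCommGroup E] [NormedSpace ℝ E]
    (ε : ℝ) (a b : E) : Prop :=
  ∃ (ea eb w : E) (s s' : ℝ), 0 ≤ s ∧ 0 ≤ s' ∧
    ‖ea‖ ≤ ε ∧ ‖eb‖ ≤ ε ∧ a + ea = s • w ∧ b + eb = s' • w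

/-- The Gram matrix `A_{u,v}` of two vectors. -/
noncomputable def gram2 {n : ℕ} (a b : EuclideanSpace ℝ (Fin n)) :
    Matrix (Fin 2) (Fin 2) ℝ :=
  !![‖a‖ ^ 2, ⟪a, b⟫; ⟪b, a⟫, ‖b‖ ^ 2]

/-- Number of edges of `G` between `S` and `C \ S` (for `S ⊆ C`). -/
noncomputable def cutEdgesIn {n : ℕ} (G : SimpleGraph (Fin n)) (C S : Finset (Fin n)) : ℕ :=
  {p : Fin n × Fin n | p.1 ∈ S ∧ p.2 ∈ C ∧ p.2 ∉ S ∧ G.Adj p.1 p.2}.ncard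

/-- Number of edges of `G` between `S` and its complement. -/
noncomputable def cutEdges {n : ℕ} (G : SimpleGraph (Fin n)) (S : Finset (Fin n)) : ℕ :=
  cutEdgesIn G Finset.univ S

/-- The cut conductance `φ_G(S) = e(S, V∖S) / (d|S|)`. -/
noncomputable def cutCond {n : ℕ} (G : SimpleGraph (Fin n)) (d : ℕ) (S : Finset (Fin n)) : ℝ :=
  (cutEdges G S : ℝ) / (d * S.card)

/-- The (inner) conductance of the induced subgraph `G[C]` is at least `φ`. -/
def InnerConductanceGE {n : ℕ} (G : SimpleGraph (Fin n)) (d : ℕ) (C : Finset (Fin n))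
    (φ : ℝ) : Prop :=
  ∀ S ⊆ C, S.Nonempty → 2 * S.card ≤ C.card →
    φ ≤ (cutEdgesIn G C S : ℝ) / (d * S.card)

/-- `G` is `(2, φ)`-clusterable. -/
def Clusterable2 {n : ℕ} (G : SimpleGraph (Fin n)) (d : ℕ) (φ : ℝ) : Prop :=
  InnerConductanceGE G d Finset.univ φ ∨
  ∃ C₁ C₂ : Finset (Fin n), C₁.Nonempty ∧ C₂.Nonempty ∧ Disjoint C₁ C₂ ∧
    C₁ ∪ C₂ = Finset.univ ∧ InnerConductanceGE G d C₁ φ ∧ InnerConductanceGE G d C₂ φ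

/-- `G` is `ε`-far from `(2, φ)`-clusterable. -/
def FarFromClusterable2 {n : ℕ} (G : SimpleGraph (Fin n)) (d : ℕ) (ε φ : ℝ) : Prop :=
  ∀ G' : SimpleGraph (Fin n), MaxDegreeLE G' d →
    ((symmDiff G.edgeSet G'.edgeSet).ncard : ℝ) ≤ ε * d * n →
    ¬ Clusterable2 G' d φ

/-- The span of the eigenvectors of `M` with eigenvalue greater than `c`. -/
noncomputable def heavySpace {n : ℕ} (M : Matrix (Fin n) (Fin n) ℝ) (c : ℝ) :
    Submodule ℝ (EuclideanSpace ℝ (Fin n)) :=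
  ⨆ μ : {μ : ℝ // c < μ}, Module.End.eigenspace (Matrix.toEuclideanLin M) (μ : ℝ)

/-- Orthogonal projection onto the span of the eigenvectors of `M` with eigenvalue
greater than `c`. -/
noncomputable def heavyProj {n : ℕ} (M : Matrix (Fin n) (Fin n) ℝ) (c : ℝ)
    (x : EuclideanSpace ℝ (Fin n)) : EuclideanSpace ℝ (Fin n) :=
  (Submodule.orthogonalProjection (heavySpace M c) x : EuclideanSpace ℝ (Fin n))

lemma stmt9_key {n m : ℕ} (hm : 0 < m) (a : EuclideanSpace ℝ (Fin n))
    (b : Fin m → EuclideanSpace ℝ (Fin n)) (ε σ : ℝ) (hε : 0 < ε) (hσ : σ ≠ 0)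
    (h : ∀ j, ∃ (ea eb w : EuclideanSpace ℝ (Fin n)) (s s' : ℝ), 0 ≤ s ∧ 0 ≤ s' ∧
      ‖ea‖ ≤ ε ∧ ‖eb‖ ≤ ε ∧ a + ea = s • w ∧ b j + eb = σ • (s' • w)) :
    ∃ (ea eb w : EuclideanSpace ℝ (Fin n)) (s s' : ℝ), 0 ≤ s ∧ 0 ≤ s' ∧
      ‖ea‖ ≤ ε ∧ ‖eb‖ ≤ ε ∧ a + ea = s • w ∧
      ((m : ℝ)⁻¹ • ∑ j, b j) + eb = σ • (s' • w) := by
  have hmR : (0 : ℝ) < (m : ℝ) := by exact_mod_cast hm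
  by_cases ha : ‖a‖ ≤ ε
  · refine ⟨-a, 0, σ⁻¹ • ((m : ℝ)⁻¹ • ∑ j, b j), 0, 1, le_refl _, zero_le_one,
      by simpa using ha, by simp [hε.le], by simp, ?_⟩
    rw [one_smul, smul_smul, mul_inv_cancel₀ hσ, one_smul, add_zero]
  · push_neg at ha
    choose ea eb w s s' hs hs' hea heb h1 h2 using h
    have hspos : ∀ j, 0 < s j := by
      intro j
      rcases (hs j).lt_or_eq with h' | h'
      · exact h'
      · exfalso
        have h0 : a + ea j = 0 := by rw [h1 j, ← h', zero_smul]
        rw [eq_neg_of_add_eq_zero_left h0, norm_neg] at ha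
        exact absurd (hea j) (not_le.mpr ha)
    set t : Fin m → ℝ := fun j => s' j / s j with ht
    have htnn : ∀ j, 0 ≤ t j := fun j => div_nonneg (hs' j) (hs j)
    have hbj : ∀ j, b j + eb j = σ • (t j • (a + ea j)) := by
      intro j
      rw [h2 j]
      congr 1
      rw [h1 j, smul_smul]
      congr 1
      exact (div_mul_cancel₀ _ (hspos j).ne').symm
    set tbar : ℝ := (m : ℝ)⁻¹ * ∑ j, t j with htbar
    have htbarnn : 0 ≤ tbar :=
      mul_nonneg (by positivity) (Finset.sum_nonneg fun j _ => htnn j)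
    set u : EuclideanSpace ℝ (Fin n) := (m : ℝ)⁻¹ • ∑ j, t j • ea j with hu
    have hunorm : ‖u‖ ≤ tbar * ε := by
      have h1' : ‖u‖ ≤ (m : ℝ)⁻¹ * ∑ j, ‖t j • ea j‖ := by
        rw [hu, norm_smul, norm_inv, Real.norm_natCast]
        exact mul_le_mul_of_nonneg_left (norm_sum_le _ _) (by positivity)
      have h2' : ∑ j, ‖t j • ea j‖ ≤ ∑ j, t j * ε := by
        apply Finset.sum_le_sum
        intro j _
        rw [norm_smul, Real.norm_eq_abs, abs_of_nonneg (htnn j)]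
        exact mul_le_mul_of_nonneg_left (hea j) (htnn j)
      calc ‖u‖ ≤ (m : ℝ)⁻¹ * ∑ j, t j * ε :=
            le_trans h1' (mul_le_mul_of_nonneg_left h2' (by positivity))
        _ = tbar * ε := by rw [htbar, ← Finset.sum_mul]; ring
    set e : EuclideanSpace ℝ (Fin n) :=
      if tbar = 0 then 0 else tbar⁻¹ • u with he
    have hte : tbar • e = u := by
      by_cases h0 : tbar = 0
      · have : ‖u‖ = 0 := le_antisymm (by simpa [h0] using hunorm) (norm_nonneg _)
        rw [he, if_pos h0, h0, zero_smul, eq_comm, ← norm_eq_zero]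
        exact this
      · rw [he, if_neg h0, smul_smul, mul_inv_cancel₀ h0, one_smul]
    have hene : ‖e‖ ≤ ε := by
      by_cases h0 : tbar = 0
      · rw [he, if_pos h0, norm_zero]; exact hε.le
      · have h0' : 0 < tbar := lt_of_le_of_ne htbarnn (Ne.symm h0)
        rw [he, if_neg h0, norm_smul, norm_inv, Real.norm_eq_abs, abs_of_pos h0']
        calc tbar⁻¹ * ‖u‖ ≤ tbar⁻¹ * (tbar * ε) :=
              mul_le_mul_of_nonneg_left hunorm (by positivity)
          _ = ε := by field_simp
    refine ⟨e, (m : ℝ)⁻¹ • ∑ j, eb j, a + e, 1, tbar, zero_le_one, htbarnn, hene, ?_,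
      (one_smul ℝ _).symm, ?_⟩
    · rw [norm_smul, norm_inv, Real.norm_natCast]
      calc (m : ℝ)⁻¹ * ‖∑ j, eb j‖ ≤ (m : ℝ)⁻¹ * ∑ j, ‖eb j‖ :=
            mul_le_mul_of_nonneg_left (norm_sum_le _ _) (by positivity)
        _ ≤ (m : ℝ)⁻¹ * ∑ _j : Fin m, ε :=
            mul_le_mul_of_nonneg_left (Finset.sum_le_sum fun j _ => heb j) (by positivity)
        _ = (m : ℝ)⁻¹ * ((m : ℝ) * ε) := by
            rw [Finset.sum_const, Finset.card_univ, Fintype.card_fin, nsmul_eq_mul]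
        _ ≤ ε := by rw [← mul_assoc, inv_mul_cancel₀ hmR.ne', one_mul]
    · have lhs_eq : ((m : ℝ)⁻¹ • ∑ j, b j) + (m : ℝ)⁻¹ • ∑ j, eb j
          = (m : ℝ)⁻¹ • ∑ j, σ • (t j • (a + ea j)) := by
        rw [← smul_add, ← Finset.sum_add_distrib]
        congr 1
        exact Finset.sum_congr rfl fun j _ => hbj j
      have rhs_eq : tbar • (a + e) = (m : ℝ)⁻¹ • ∑ j, t j • (a + ea j) := by
        calc tbar • (a + e) = tbar • a + u := by rw [smul_add, hte]
          _ = (m : ℝ)⁻¹ • ((∑ j, t j) • a) + (m : ℝ)⁻¹ • ∑ j, t j • ea j := by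
              rw [htbar, hu, ← smul_smul]
          _ = (m : ℝ)⁻¹ • ((∑ j, t j) • a + ∑ j, t j • ea j) := (smul_add _ _ _).symm
          _ = (m : ℝ)⁻¹ • ∑ j, (t j • a + t j • ea j) := by
              rw [Finset.sum_smul, ← Finset.sum_add_distrib]
          _ = (m : ℝ)⁻¹ • ∑ j, t j • (a + ea j) := by
              congr 1
              exact Finset.sum_congr rfl fun j _ => (smul_add _ _ _).symm
      rw [lhs_eq, rhs_eq, smul_comm σ ((m : ℝ)⁻¹), Finset.smul_sum]
      simp [Finset.smul_sum]

theorem stmt9 {n m : ℕ} (hm : 0 < m) (a : EuclideanSpace ℝ (Fin n))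
    (b : Fin m → EuclideanSpace ℝ (Fin n)) (ε : ℝ) (hε : 0 < ε) :
    ((∀ j, CloseAntipodal ε a (b j)) →
      CloseAntipodal ε a ((m : ℝ)⁻¹ • ∑ j, b j)) ∧
    ((∀ j, ClosePodal ε a (b j)) →
      ClosePodal ε a ((m : ℝ)⁻¹ • ∑ j, b j)) := by
  constructor
  · intro h
    have h' : ∀ j, ∃ (ea eb w : EuclideanSpace ℝ (Fin n)) (s s' : ℝ), 0 ≤ s ∧ 0 ≤ s' ∧
        ‖ea‖ ≤ ε ∧ ‖eb‖ ≤ ε ∧ a + ea = s • w ∧ b j + eb = (-1 : ℝ) • (s' • w) := by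
      intro j
      obtain ⟨ea, eb, w, s, s', h1, h2, h3, h4, h5, h6⟩ := h j
      exact ⟨ea, eb, w, s, s', h1, h2, h3, h4, h5, by rw [neg_one_smul]; exact h6⟩
    obtain ⟨ea, eb, w, s, s', h1, h2, h3, h4, h5, h6⟩ :=
      stmt9_key hm a b ε (-1) hε (by norm_num) h'
    exact ⟨ea, eb, w, s, s', h1, h2, h3, h4, h5, by rw [h6, neg_one_smul]⟩
  · intro h
    have h' : ∀ j, ∃ (ea eb w : EuclideanSpace ℝ (Fin n)) (s s' : ℝ), 0 ≤ s ∧ 0 ≤ s' ∧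
        ‖ea‖ ≤ ε ∧ ‖eb‖ ≤ ε ∧ a + ea = s • w ∧ b j + eb = (1 : ℝ) • (s' • w) := by
      intro j
      obtain ⟨ea, eb, w, s, s', h1, h2, h3, h4, h5, h6⟩ := h j
      exact ⟨ea, eb, w, s, s', h1, h2, h3, h4, h5, by rw [one_smul]; exact h6⟩
    obtain ⟨ea, eb, w, s, s', h1, h2, h3, h4, h5, h6⟩ :=
      stmt9_key hm a b ε (1) hε one_ne_zero h'
    exact ⟨ea, eb, w, s, s', h1, h2, h3, h4, h5, by rw [h6, one_smul]⟩
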